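/- Let X be a real Banach space and let F : B(0, 1) → X be an isometry. Suppose there exist z ∈ B(0, 1) and ρ > 0 such that B(z, ρ) ⊂ B(0, 1) and F(x) = x for every x ∈ B(z, ρ). Then F(x) = x for every x ∈ B(0, 1). -/

import Mathlib

open Metric NormedSpace

section AuxIsometry

variable {X : Type*} [NormedAddCommGroup X] [NormedSpace ℝ X]

/-- Fractional step: from invariance of norms under translation by `d` on the ball `B(w,r)`,
deduce invariance under `u • d` for `0 ≤ u ≤ 1`, with room `u * ‖d‖`. -/
private lemma step_plus (w d : X) (r : ℝ)
    (H : ∀ v : X, ‖v - w‖ ≤ r → ‖v + d‖ = ‖v‖)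
    {u : ℝ} (hu0 : 0 ≤ u) (hu1 : u ≤ 1)
    {v : X} (hv : ‖v - w‖ + u * ‖d‖ ≤ r) :
    ‖v + u • d‖ = ‖v‖ ∧ ‖v - u • d‖ = ‖v‖ := by
  have hd0 : 0 ≤ u * ‖d‖ := mul_nonneg hu0 (norm_nonneg d)
  have hvball : ‖v - w‖ ≤ r := by linarith
  have A0 : ‖v + d‖ = ‖v‖ := H v hvball
  have hsm : ‖u • d‖ = u * ‖d‖ := by
    rw [norm_smul, Real.norm_eq_abs, abs_of_nonneg hu0]
  have A1 : ‖(v + u • d) + d‖ = ‖v + u • d‖ := by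
    apply H
    have h : v + u • d - w = (v - w) + u • d := by abel
    rw [h]
    calc ‖(v - w) + u • d‖ ≤ ‖v - w‖ + ‖u • d‖ := norm_add_le _ _
      _ ≤ r := by rw [hsm]; linarith
  have A2 : ‖(v - u • d) + d‖ = ‖v - u • d‖ := by
    apply H
    have h : v - u • d - w = (v - w) - u • d := by abel
    rw [h]
    calc ‖(v - w) - u • d‖ ≤ ‖v - w‖ + ‖u • d‖ := norm_sub_le _ _
      _ ≤ r := by rw [hsm]; linarith
  have A2' : ‖v + (1 - u) • d‖ = ‖v - u • d‖ := by
    have h : v + (1 - u) • d = (v - u • d) + d := by module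
    rw [h, A2]
  have h1u : (0:ℝ) ≤ 1 - u := by linarith
  have h1 : ‖v + u • d‖ ≤ ‖v‖ := by
    have hid : v + u • d = (1 - u) • v + u • (v + d) := by module
    rw [hid]
    calc ‖(1-u) • v + u • (v + d)‖ ≤ ‖(1-u) • v‖ + ‖u • (v+d)‖ := norm_add_le _ _
      _ = (1-u) * ‖v‖ + u * ‖v + d‖ := by
          rw [norm_smul, norm_smul, Real.norm_eq_abs, Real.norm_eq_abs,
            abs_of_nonneg h1u, abs_of_nonneg hu0]
      _ = ‖v‖ := by rw [A0]; ring
  have h2 : ‖v‖ ≤ ‖v + u • d‖ := by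
    have hA1' : ‖v + (1 + u) • d‖ = ‖v + u • d‖ := by
      have h : v + (1 + u) • d = (v + u • d) + d := by module
      rw [h, A1]
    have hid : v + d = u • (v + u • d) + (1 - u) • (v + (1 + u) • d) := by
      match_scalars <;> ring
    calc ‖v‖ = ‖v + d‖ := A0.symm
      _ = ‖u • (v + u • d) + (1 - u) • (v + (1 + u) • d)‖ := by rw [← hid]
      _ ≤ ‖u • (v + u • d)‖ + ‖(1 - u) • (v + (1 + u) • d)‖ := norm_add_le _ _
      _ = u * ‖v + u • d‖ + (1 - u) * ‖v + (1 + u) • d‖ := by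
          rw [norm_smul, norm_smul, Real.norm_eq_abs, Real.norm_eq_abs,
            abs_of_nonneg hu0, abs_of_nonneg h1u]
      _ = ‖v + u • d‖ := by rw [hA1']; ring
  have h3 : ‖v - u • d‖ ≤ ‖v‖ := by
    rw [← A2']
    have hid : v + (1 - u) • d = u • v + (1 - u) • (v + d) := by module
    rw [hid]
    calc ‖u • v + (1 - u) • (v + d)‖ ≤ ‖u • v‖ + ‖(1 - u) • (v + d)‖ := norm_add_le _ _
      _ = u * ‖v‖ + (1 - u) * ‖v + d‖ := by
          rw [norm_smul, norm_smul, Real.norm_eq_abs, Real.norm_eq_abs,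
            abs_of_nonneg hu0, abs_of_nonneg h1u]
      _ = ‖v‖ := by rw [A0]; ring
  have h4 : ‖v‖ ≤ ‖v - u • d‖ := by
    have hid : v = (1 - u) • (v - u • d) + u • (v + (1 - u) • d) := by
      match_scalars <;> ring
    calc ‖v‖ = ‖(1 - u) • (v - u • d) + u • (v + (1 - u) • d)‖ := by rw [← hid]
      _ ≤ ‖(1 - u) • (v - u • d)‖ + ‖u • (v + (1 - u) • d)‖ := norm_add_le _ _
      _ = (1 - u) * ‖v - u • d‖ + u * ‖v + (1 - u) • d‖ := by
          rw [norm_smul, norm_smul, Real.norm_eq_abs, Real.norm_eq_abs,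
            abs_of_nonneg h1u, abs_of_nonneg hu0]
      _ = ‖v - u • d‖ := by rw [A2']; ring
  exact ⟨le_antisymm h1 h2, le_antisymm h3 h4⟩

/-- Full shift invariance: `‖v + t • d‖ = ‖v‖` whenever `‖v - w‖ + |t| * ‖d‖ ≤ r`. -/
private lemma shift_inv (w d : X) (r : ℝ)
    (H : ∀ v : X, ‖v - w‖ ≤ r → ‖v + d‖ = ‖v‖) :
    ∀ (n : ℕ) (t : ℝ) (v : X), |t| ≤ n → ‖v - w‖ + |t| * ‖d‖ ≤ r →
      ‖v + t • d‖ = ‖v‖ := by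
  intro n
  induction n with
  | zero =>
    intro t v ht hv
    have ht0 : t = 0 := by
      have : |t| ≤ 0 := by exact_mod_cast ht
      have := abs_nonneg t
      have : |t| = 0 := le_antisymm ‹|t| ≤ 0› ‹0 ≤ |t|›
      exact abs_eq_zero.mp this
    simp [ht0]
  | succ n ih =>
    intro t v ht hv
    rcases le_or_gt (|t|) 1 with h1 | h1
    · rcases le_or_gt 0 t with hs | hs
      · have habs : |t| = t := abs_of_nonneg hs
        exact (step_plus w d r H hs (habs ▸ h1) (by rw [← habs]; exact hv)).1
      · have habs : |t| = -t := abs_of_neg hs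
        have h0 : (0:ℝ) ≤ -t := by linarith
        have := (step_plus w d r H h0 (habs ▸ h1) (v := v) (by rw [← habs]; exact hv)).2
        have hvv : v - (-t) • d = v + t • d := by module
        rwa [hvv] at this
    · have htd : (1:ℝ) * ‖d‖ ≤ |t| * ‖d‖ :=
        mul_le_mul_of_nonneg_right (le_of_lt h1) (norm_nonneg d)
      have hone : ‖v - w‖ + 1 * ‖d‖ ≤ r := by linarith
      have hb : ∀ d' : X, ‖(v + d') - w‖ ≤ ‖v - w‖ + ‖d'‖ := by
        intro d'
        have h : v + d' - w = (v - w) + d' := by abel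
        rw [h]; exact norm_add_le _ _
      rcases le_or_gt 0 t with hs | hs
      · have habs : |t| = t := abs_of_nonneg hs
        have ht1 : 1 < t := by rwa [habs] at h1
        have hv1 : ‖v + d‖ = ‖v‖ := H v (by nlinarith [norm_nonneg d, abs_nonneg t])
        have hrec := ih (t - 1) (v + d) ?_ ?_
        · have hvv : (v + d) + (t - 1) • d = v + t • d := by module
          rw [hvv] at hrec
          rw [hrec, hv1]
        · rw [abs_of_nonneg (by linarith : (0:ℝ) ≤ t - 1)]
          have : |t| ≤ ((n:ℝ) + 1) := by exact_mod_cast ht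
          rw [habs] at this; linarith
        · rw [abs_of_nonneg (by linarith : (0:ℝ) ≤ t - 1)]
          have := hb d
          rw [habs] at hv
          nlinarith [norm_nonneg d]
      · have habs : |t| = -t := abs_of_neg hs
        have ht1 : t < -1 := by rw [habs] at h1; linarith
        have hv1 : ‖v - d‖ = ‖v‖ := by
          have := (step_plus w d r H (zero_le_one) (le_refl (1:ℝ)) (v := v) hone).2
          simpa using this
        have hrec := ih (t + 1) (v - d) ?_ ?_
        · have hvv : (v - d) + (t + 1) • d = v + t • d := by module
          rw [hvv] at hrec
          rw [hrec, hv1]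
        · rw [abs_of_nonpos (by linarith : t + 1 ≤ 0)]
          have : |t| ≤ ((n:ℝ) + 1) := by exact_mod_cast ht
          rw [habs] at this; linarith
        · rw [abs_of_nonpos (by linarith : t + 1 ≤ 0)]
          have h := hb (-d)
          rw [norm_neg] at h
          have hvv : v + -d = v - d := by abel
          rw [hvv] at h
          rw [habs] at hv
          nlinarith [norm_nonneg d]

private lemma key_ineq (w e : X) (r : ℝ) (hr : 0 < r) (hrw : r ≤ ‖w‖)
    (he : ‖e‖ = 1)
    (He : ∀ (v : X) (σ : ℝ), ‖v - w‖ + |σ| ≤ r → ‖v + σ • e‖ = ‖v‖)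
    (f : X →L[ℝ] ℝ) (hf1 : ‖f‖ = 1) (hfw : f w = ‖w‖) :
    r ≤ sSup {t : ℝ | ‖w + t • e‖ ≤ ‖w‖} ∧
      r * sSup {t : ℝ | ‖w + t • e‖ ≤ ‖w‖} ≤
        (‖w‖ - r) * sSup {t : ℝ | ‖w + t • (-e)‖ ≤ ‖w‖} := by
  have hW : 0 < ‖w‖ := lt_of_lt_of_le hr hrw
  have hWne : ‖w‖ ≠ 0 := ne_of_gt hW
  have fbound : ∀ y : X, f y ≤ ‖y‖ := by
    intro y
    have h := f.le_opNorm y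
    rw [hf1, one_mul, Real.norm_eq_abs] at h
    exact le_trans (le_abs_self _) h
  have hww : ‖w - w‖ = 0 := by simp
  have hp : ‖w + r • e‖ = ‖w‖ :=
    He w r (by rw [hww, abs_of_nonneg hr.le]; linarith)
  have hm : ‖w - r • e‖ = ‖w‖ := by
    have h := He w (-r) (by rw [hww, abs_neg, abs_of_nonneg hr.le]; linarith)
    rwa [neg_smul, ← sub_eq_add_neg] at h
  -- f e = 0
  have hfe : f e = 0 := by
    have h1 : f w + r * f e ≤ ‖w‖ := by
      have h := fbound (w + r • e)
      rw [hp] at h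
      simpa [map_add, map_smul, smul_eq_mul] using h
    have h2 : f w - r * f e ≤ ‖w‖ := by
      have h := fbound (w - r • e)
      rw [hm] at h
      simpa [map_sub, map_smul, smul_eq_mul] using h
    rw [hfw] at h1 h2
    have hle : r * f e ≤ 0 := by linarith
    have hge : 0 ≤ r * f e := by linarith
    have h0 := le_antisymm hle hge
    rcases mul_eq_zero.mp h0 with h | h
    · exact absurd h (ne_of_gt hr)
    · exact h
  set A : Set ℝ := {t : ℝ | ‖w + t • e‖ ≤ ‖w‖} with hA_def
  have hA0 : (0:ℝ) ∈ A := by simp [hA_def]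
  have hAb : BddAbove A := by
    refine ⟨2 * ‖w‖, fun t ht => ?_⟩
    have ht' : ‖w + t • e‖ ≤ ‖w‖ := ht
    have h1 : ‖t • e‖ = ‖(w + t • e) - w‖ := by congr 1; abel
    have h2 : ‖(w + t • e) - w‖ ≤ ‖w + t • e‖ + ‖w‖ := norm_sub_le _ _
    have h3 : ‖t • e‖ = |t| := by rw [norm_smul, Real.norm_eq_abs, he, mul_one]
    rw [h1] at h3
    exact le_trans (le_abs_self t) (by linarith)
  have hAcl : IsClosed A := by
    have h : A = (fun t : ℝ => ‖w + t • e‖) ⁻¹' Set.Iic ‖w‖ := rfl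
    rw [h]
    apply IsClosed.preimage _ isClosed_Iic
    exact (continuous_const.add (continuous_id.smul continuous_const)).norm
  set B := sSup A with hB_def
  have hrA : r ∈ A := le_of_eq hp
  have hrB : r ≤ B := le_csSup hAb hrA
  have hBpos : 0 < B := lt_of_lt_of_le hr hrB
  have hBmem : B ∈ A := hAcl.csSup_mem ⟨0, hA0⟩ hAb
  have hBnorm : ‖w + B • e‖ = ‖w‖ := by
    refine le_antisymm hBmem ?_
    have h1 : f (w + B • e) = ‖w‖ := by
      simp only [map_add, map_smul, smul_eq_mul, hfw, hfe, mul_zero, add_zero]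
    calc ‖w‖ = f (w + B • e) := h1.symm
      _ ≤ ‖w + B • e‖ := fbound _
  -- norms of the sliding points
  have hps : ∀ s : ℝ, 0 < s → s < r → ‖w - (s / ‖w‖) • (w + B • e)‖ = ‖w‖ - s := by
    intro s hs0 hsr
    set p := w - (s / ‖w‖) • (w + B • e) with hp_def
    have hsW : 0 < s / ‖w‖ := div_pos hs0 hW
    have hpw : ‖p - w‖ = s := by
      have h : p - w = -((s / ‖w‖) • (w + B • e)) := by rw [hp_def]; abel
      rw [h, norm_neg, norm_smul, Real.norm_eq_abs, abs_of_pos hsW, hBnorm]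
      field_simp
    have hfp : f p = ‖w‖ - s := by
      have h : f p = f w - s / ‖w‖ * (f w + B * f e) := by
        simp only [hp_def, map_sub, map_add, map_smul, smul_eq_mul]
      rw [h, hfw, hfe, mul_zero, add_zero, div_mul_cancel₀ _ hWne]
    have hflep : ‖w‖ - s ≤ ‖p‖ := by
      calc ‖w‖ - s = f p := hfp.symm
        _ ≤ ‖p‖ := fbound p
    have hppos : 0 < ‖p‖ := lt_of_lt_of_le (by linarith) hflep
    have hplus : ‖p + (r - s) • e‖ = ‖p‖ :=
      He p (r - s) (by rw [hpw, abs_of_nonneg (by linarith : (0:ℝ) ≤ r - s)]; linarith)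
    have hminus : ‖p - (r - s) • e‖ = ‖p‖ := by
      have h := He p (-(r - s))
        (by rw [hpw, abs_neg, abs_of_nonneg (by linarith : (0:ℝ) ≤ r - s)]; linarith)
      rwa [neg_smul, ← sub_eq_add_neg] at h
    have hP0 : p + (r - s) • e ≠ 0 := by
      intro h
      rw [h, norm_zero] at hplus
      exact absurd hplus.symm (ne_of_gt hppos)
    obtain ⟨g, hg1, hgP⟩ := exists_dual_vector ℝ (p + (r - s) • e) (norm_ne_zero_iff.mpr hP0)
    have hgP' : g (p + (r - s) • e) = ‖p‖ := by
      have h : g (p + (r - s) • e) = ‖p + (r - s) • e‖ := hgP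
      rw [h, hplus]
    have gb : ∀ y : X, g y ≤ ‖y‖ := by
      intro y
      have h := g.le_opNorm y
      rw [hg1, one_mul, Real.norm_eq_abs] at h
      exact le_trans (le_abs_self _) h
    have hge : 0 ≤ g e := by
      have h1 : g (p - (r - s) • e) ≤ ‖p‖ := by
        calc g (p - (r - s) • e) ≤ ‖p - (r - s) • e‖ := gb _
          _ = ‖p‖ := hminus
      have h2 : g (p + (r - s) • e) - g (p - (r - s) • e) = 2 * ((r - s) * g e) := by
        simp only [map_add, map_sub, map_smul, smul_eq_mul]
        ring
      have h3 : 0 ≤ (r - s) * g e := by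
        rw [hgP'] at h2
        linarith
      by_contra hneg
      push_neg at hneg
      have : (r - s) * g e < 0 := mul_neg_of_pos_of_neg (by linarith) hneg
      linarith
    have hgwB : g w + B * g e ≤ ‖w‖ := by
      have h := gb (w + B • e)
      rw [hBnorm] at h
      simpa [map_add, map_smul, smul_eq_mul] using h
    have hexpand : g (p + (r - s) • e) =
        (1 - s / ‖w‖) * g w + (r - s - s * B / ‖w‖) * g e := by
      simp only [hp_def, map_add, map_sub, map_smul, smul_eq_mul]
      ring
    have hcoef : 0 ≤ 1 - s / ‖w‖ := by
      have h : s / ‖w‖ ≤ 1 := by rw [div_le_one hW]; linarith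
      linarith
    have hkey : ‖p‖ ≤ ‖w‖ - s := by
      have e1 : (1 - s / ‖w‖) * g w ≤ (1 - s / ‖w‖) * (‖w‖ - B * g e) :=
        mul_le_mul_of_nonneg_left (by linarith) hcoef
      have e2 : (1 - s / ‖w‖) * (‖w‖ - B * g e) =
          ‖w‖ - s - B * g e + (s / ‖w‖) * (B * g e) := by
        field_simp
        ring
      have e3 : (r - s - s * B / ‖w‖) * g e = (r - s) * g e - (s / ‖w‖) * (B * g e) := by
        field_simp
      have e4 : (r - s) * g e ≤ B * g e :=
        mul_le_mul_of_nonneg_right (by linarith) hge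
      have h5 := hgP'
      rw [hexpand] at h5
      linarith
    linarith [hflep, hkey]
  -- the limiting point q
  set q := w - (r / ‖w‖) • (w + B • e) with hq_def
  have hfq : f q = ‖w‖ - r := by
    have h : f q = f w - r / ‖w‖ * (f w + B * f e) := by
      simp only [hq_def, map_sub, map_add, map_smul, smul_eq_mul]
    rw [h, hfw, hfe, mul_zero, add_zero, div_mul_cancel₀ _ hWne]
  have hqge : ‖w‖ - r ≤ ‖q‖ := by
    calc ‖w‖ - r = f q := hfq.symm
      _ ≤ ‖q‖ := fbound q
  have hqle : ‖q‖ ≤ ‖w‖ - r := by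
    apply le_of_forall_pos_le_add
    intro ε hε
    rcases lt_or_ge (ε / 2) r with hεr | hεr
    · have hs0 : 0 < r - ε / 2 := by linarith
      have hsr : r - ε / 2 < r := by linarith
      have hval := hps (r - ε / 2) hs0 hsr
      have hdiff : ‖q - (w - ((r - ε / 2) / ‖w‖) • (w + B • e))‖ = ε / 2 := by
        have h : q - (w - ((r - ε / 2) / ‖w‖) • (w + B • e)) =
            (((r - ε / 2) / ‖w‖) - r / ‖w‖) • (w + B • e) := by
          rw [hq_def]; module
        rw [h, norm_smul, Real.norm_eq_abs, hBnorm]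
        have h2 : ((r - ε / 2) / ‖w‖) - r / ‖w‖ = -(ε / 2) / ‖w‖ := by ring
        rw [h2, abs_div, abs_neg, abs_of_pos (by linarith : (0:ℝ) < ε / 2),
          abs_of_pos hW]
        field_simp
      calc ‖q‖ ≤ ‖w - ((r - ε / 2) / ‖w‖) • (w + B • e)‖ +
            ‖q - (w - ((r - ε / 2) / ‖w‖) • (w + B • e))‖ := by
              have h : q = (w - ((r - ε / 2) / ‖w‖) • (w + B • e)) +
                  (q - (w - ((r - ε / 2) / ‖w‖) • (w + B • e))) := by abel
              nth_rewrite 1 [h]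
              exact norm_add_le _ _
        _ = (‖w‖ - (r - ε / 2)) + ε / 2 := by rw [hval, hdiff]
        _ ≤ (‖w‖ - r) + ε := by linarith
    · have hq2 : ‖q‖ ≤ ‖w‖ + r := by
        calc ‖q‖ ≤ ‖w‖ + ‖(r / ‖w‖) • (w + B • e)‖ := norm_sub_le _ _
          _ = ‖w‖ + r := by
              rw [norm_smul, Real.norm_eq_abs, abs_of_pos (div_pos hr hW), hBnorm]
              field_simp
      linarith
  have hqnorm : ‖q‖ = ‖w‖ - r := le_antisymm hqle hqge
  rcases eq_or_lt_of_le hrw with heq | hlt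
  · exfalso
    have hq0 : ‖q‖ = 0 := by rw [hqnorm, ← heq]; ring
    have hrw1 : r / ‖w‖ = 1 := by rw [← heq]; field_simp
    have hqB : q = -(B • e) := by
      rw [hq_def, hrw1]
      module
    rw [hqB, norm_neg, norm_smul, Real.norm_eq_abs, he, mul_one,
      abs_of_pos hBpos] at hq0
    linarith
  · refine ⟨hrB, ?_⟩
    have hWr : 0 < ‖w‖ - r := by linarith
    set A' : Set ℝ := {t : ℝ | ‖w + t • (-e)‖ ≤ ‖w‖} with hA'_def
    have hA'b : BddAbove A' := by
      refine ⟨2 * ‖w‖, fun t ht => ?_⟩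
      have ht' : ‖w + t • (-e)‖ ≤ ‖w‖ := ht
      have h1 : ‖t • (-e)‖ = ‖(w + t • (-e)) - w‖ := by congr 1; abel
      have h2 : ‖(w + t • (-e)) - w‖ ≤ ‖w + t • (-e)‖ + ‖w‖ := norm_sub_le _ _
      have h3 : ‖t • (-e)‖ = |t| := by
        rw [norm_smul, Real.norm_eq_abs, norm_neg, he, mul_one]
      rw [h1] at h3
      exact le_trans (le_abs_self t) (by linarith)
    have htmem : r * B / (‖w‖ - r) ∈ A' := by
      show ‖w + (r * B / (‖w‖ - r)) • (-e)‖ ≤ ‖w‖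
      have hscal : w + (r * B / (‖w‖ - r)) • (-e) = (‖w‖ / (‖w‖ - r)) • q := by
        rw [hq_def]
        match_scalars
        · field_simp
        · field_simp
      rw [hscal, norm_smul, Real.norm_eq_abs, abs_of_pos (div_pos hW hWr), hqnorm,
        div_mul_cancel₀ _ (ne_of_gt hWr)]
    have hle := le_csSup hA'b htmem
    rw [div_le_iff₀ hWr] at hle
    calc r * B ≤ sSup A' * (‖w‖ - r) := hle
      _ = (‖w‖ - r) * sSup A' := by ring

/-- If translation by `d` preserves norms on a ball `B(w, r)` with `‖w‖ < 2r`, then `d = 0`. -/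
private lemma shift_zero (w d : X) {r : ℝ} (hr : 0 < r) (hw : ‖w‖ < 2 * r)
    (H : ∀ v : X, ‖v - w‖ ≤ r → ‖v + d‖ = ‖v‖) : d = 0 := by
  by_contra hd
  have hδ : 0 < ‖d‖ := norm_pos_iff.mpr hd
  have hδne : ‖d‖ ≠ 0 := ne_of_gt hδ
  set e : X := ‖d‖⁻¹ • d with he_def
  have he : ‖e‖ = 1 := by
    rw [he_def, norm_smul, Real.norm_eq_abs, abs_of_pos (inv_pos.mpr hδ)]
    field_simp
  have He : ∀ (v : X) (σ : ℝ), ‖v - w‖ + |σ| ≤ r → ‖v + σ • e‖ = ‖v‖ := by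
    intro v σ hcond
    obtain ⟨n, hn⟩ := exists_nat_ge (|σ| / ‖d‖)
    have hse : σ • e = (σ / ‖d‖) • d := by
      rw [he_def, smul_smul, div_eq_mul_inv]
    rw [hse]
    apply shift_inv w d r H n (σ / ‖d‖) v
    · rw [abs_div, abs_of_pos hδ]
      exact hn
    · rw [abs_div, abs_of_pos hδ, div_mul_cancel₀ _ hδne]
      exact hcond
  rcases lt_or_ge ‖w‖ r with hcase | hcase
  · -- easy case : 0 is in the interior of the ball
    have h0 : ‖(0:X) + (r - ‖w‖) • e‖ = ‖(0:X)‖ := by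
      apply He 0 (r - ‖w‖)
      rw [zero_sub, norm_neg, abs_of_pos (by linarith : (0:ℝ) < r - ‖w‖)]
      linarith
    rw [zero_add, norm_zero, norm_smul, Real.norm_eq_abs, he, mul_one,
      abs_of_pos (by linarith : (0:ℝ) < r - ‖w‖)] at h0
    linarith
  · have hw0 : w ≠ 0 := by
      intro h
      rw [h, norm_zero] at hcase
      linarith
    obtain ⟨f, hf1, hfw⟩ := exists_dual_vector ℝ w (norm_ne_zero_iff.mpr hw0)
    have hfw' : f w = ‖w‖ := hfw
    have He' : ∀ (v : X) (σ : ℝ), ‖v - w‖ + |σ| ≤ r → ‖v + σ • (-e)‖ = ‖v‖ := by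
      intro v σ hcond
      have h := He v (-σ) (by rwa [abs_neg])
      rw [smul_neg]
      rwa [neg_smul] at h
    obtain ⟨hbp_ge, hineq1⟩ := key_ineq w e r hr hcase he He f hf1 hfw'
    obtain ⟨hbm_ge, hineq2⟩ := key_ineq w (-e) r hr hcase (by rwa [norm_neg]) He' f hf1 hfw'
    simp only [neg_neg] at hineq2
    set bp := sSup {t : ℝ | ‖w + t • e‖ ≤ ‖w‖} with hbp_def
    set bm := sSup {t : ℝ | ‖w + t • (-e)‖ ≤ ‖w‖} with hbm_def
    nlinarith [hineq1, hineq2, hbp_ge, hbm_ge, hr, hw]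

/-- An isometry of the unit ball fixing the ball `B(c, r) ⊆ B(0,1)` pointwise fixes every
point of the unit ball at distance `< 2r` from `c`. -/
private lemma fix_of_near (F : X → X)
    (hF : ∀ x₁ ∈ closedBall (0 : X) 1, ∀ x₂ ∈ closedBall (0 : X) 1,
      ‖F x₁ - F x₂‖ = ‖x₁ - x₂‖)
    (c : X) (r : ℝ) (hr : 0 < r)
    (hsub : ∀ p : X, ‖p - c‖ ≤ r → ‖p‖ ≤ 1)
    (hfix : ∀ p : X, ‖p - c‖ ≤ r → F p = p)
    (x : X) (hx : ‖x‖ ≤ 1) (hxc : ‖x - c‖ < 2 * r) :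
    F x = x := by
  have hmem : ∀ y : X, ‖y‖ ≤ 1 → y ∈ closedBall (0 : X) 1 := by
    intro y hy
    rw [mem_closedBall, dist_zero_right]
    exact hy
  have H : ∀ v : X, ‖v - (x - c)‖ ≤ r → ‖v + (F x - x)‖ = ‖v‖ := by
    intro v hv
    have hp : ‖(x - v) - c‖ ≤ r := by
      have h : (x - v) - c = -(v - (x - c)) := by abel
      rw [h, norm_neg]
      exact hv
    have h1 : F (x - v) = x - v := hfix _ hp
    have h2 : ‖F x - F (x - v)‖ = ‖x - (x - v)‖ :=
      hF x (hmem x hx) (x - v) (hmem _ (hsub _ hp))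
    rw [h1] at h2
    have h3 : x - (x - v) = v := by abel
    rw [h3] at h2
    have h4 : v + (F x - x) = F x - (x - v) := by abel
    rw [h4, h2]
  have hzero : F x - x = 0 := shift_zero (x - c) (F x - x) hr hxc H
  have := sub_eq_zero.mp hzero
  exact this

end AuxIsometry

/-- An isometry of the closed unit ball into `X` that fixes some small ball
pointwise is the identity on the whole unit ball. -/
theorem isometry_unitBall_fix_small_ball_eq_id
    {X : Type*} [NormedAddCommGroup X] [NormedSpace ℝ X] [CompleteSpace X]
    (F : X → X)
    (hF : ∀ x₁ ∈ Metric.closedBall (0 : X) 1, ∀ x₂ ∈ Metric.closedBall (0 : X) 1,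
      ‖F x₁ - F x₂‖ = ‖x₁ - x₂‖)
    (z : X) (hz : z ∈ Metric.closedBall (0 : X) 1) (ρ : ℝ) (hρ : 0 < ρ)
    (hsub : Metric.closedBall z ρ ⊆ Metric.closedBall (0 : X) 1)
    (hfix : ∀ x ∈ Metric.closedBall z ρ, F x = x) :
    ∀ x ∈ Metric.closedBall (0 : X) 1, F x = x := by
  have hmem : ∀ y : X, ‖y‖ ≤ 1 ↔ y ∈ closedBall (0 : X) 1 := by
    intro y
    rw [mem_closedBall, dist_zero_right]
  have hsub' : ∀ p : X, ‖p - z‖ ≤ ρ → ‖p‖ ≤ 1 := by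
    intro p hp
    have h : p ∈ closedBall z ρ := by rwa [mem_closedBall, dist_eq_norm]
    exact (hmem p).mpr (hsub h)
  have hfix' : ∀ p : X, ‖p - z‖ ≤ ρ → F p = p := by
    intro p hp
    exact hfix p (by rwa [mem_closedBall, dist_eq_norm])
  intro x hxball
  have hx : ‖x‖ ≤ 1 := (hmem x).mpr hxball
  set L := ‖x - z‖ with hL_def
  have hL0 : 0 ≤ L := norm_nonneg _
  set β : ℝ := max (1/2) (L / (L + ρ)) with hβ_def
  have hLρ : 0 < L + ρ := by linarith
  have hβpos : 0 < β := lt_of_lt_of_le (by norm_num) (le_max_left _ _)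
  have hβlt : β < 1 := by
    apply max_lt (by norm_num)
    rw [div_lt_one hLρ]
    linarith
  have hβL : (1 - β) * L < ρ := by
    rcases le_or_gt L 0 with h | h
    · have : L = 0 := le_antisymm h hL0
      rw [this, mul_zero]; exact hρ
    · have h1 : L / (L + ρ) ≤ β := le_max_right _ _
      have h2 : 1 - β ≤ ρ / (L + ρ) := by
        have : L / (L + ρ) + ρ / (L + ρ) = 1 := by field_simp
        linarith
      have h3 : (1 - β) * L ≤ ρ / (L + ρ) * L :=
        mul_le_mul_of_nonneg_right h2 hL0
      have h4 : ρ / (L + ρ) * L < ρ := by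
        rw [div_mul_eq_mul_div, div_lt_iff₀ hLρ]
        nlinarith
      linarith
  -- inductive fixing along the segment
  have hballn : ∀ n : ℕ, ∀ p : X,
      ‖p - (z + (1 - β ^ n) • (x - z))‖ ≤ β ^ n * ρ → ‖p‖ ≤ 1 := by
    intro n p hp
    have hbn : (0:ℝ) < β ^ n := pow_pos hβpos n
    have hbn1 : β ^ n ≤ 1 := pow_le_one₀ hβpos.le hβlt.le
    set a : X := z + (β ^ n)⁻¹ • (p - (z + (1 - β ^ n) • (x - z))) with ha_def
    have haz : ‖a - z‖ ≤ ρ := by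
      have h : a - z = (β ^ n)⁻¹ • (p - (z + (1 - β ^ n) • (x - z))) := by
        rw [ha_def]; abel
      rw [h, norm_smul, Real.norm_eq_abs, abs_of_pos (inv_pos.mpr hbn)]
      rw [inv_mul_le_iff₀ hbn]
      linarith [hp]
    have ha1 : ‖a‖ ≤ 1 := hsub' a haz
    have hpa : p = β ^ n • a + (1 - β ^ n) • x := by
      rw [ha_def, smul_add, smul_inv_smul₀ (ne_of_gt hbn)]
      module
    calc ‖p‖ = ‖β ^ n • a + (1 - β ^ n) • x‖ := by rw [← hpa]
      _ ≤ ‖β ^ n • a‖ + ‖(1 - β ^ n) • x‖ := norm_add_le _ _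
      _ = β ^ n * ‖a‖ + (1 - β ^ n) * ‖x‖ := by
          rw [norm_smul, norm_smul, Real.norm_eq_abs, Real.norm_eq_abs,
            abs_of_pos hbn, abs_of_nonneg (by linarith : (0:ℝ) ≤ 1 - β ^ n)]
      _ ≤ β ^ n * 1 + (1 - β ^ n) * 1 := by
          apply add_le_add
          · exact mul_le_mul_of_nonneg_left ha1 hbn.le
          · exact mul_le_mul_of_nonneg_left hx (by linarith)
      _ = 1 := by ring
  have hkey : ∀ n : ℕ, ∀ y : X,
      ‖y - (z + (1 - β ^ n) • (x - z))‖ ≤ β ^ n * ρ → F y = y := by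
    intro n
    induction n with
    | zero =>
      intro y hy
      simp only [pow_zero, sub_self, zero_smul, add_zero, one_mul] at hy
      exact hfix' y hy
    | succ n ih =>
      intro y hy
      have hbn : (0:ℝ) < β ^ n := pow_pos hβpos n
      have hy1 : ‖y‖ ≤ 1 := hballn (n+1) y hy
      apply fix_of_near F hF (z + (1 - β ^ n) • (x - z)) (β ^ n * ρ)
        (mul_pos hbn hρ) (hballn n) ih y hy1
      -- distance estimate
      have hcc : ‖(z + (1 - β ^ (n+1)) • (x - z)) - (z + (1 - β ^ n) • (x - z))‖
          = (β ^ n - β ^ (n+1)) * L := by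
        have h : (z + (1 - β ^ (n+1)) • (x - z)) - (z + (1 - β ^ n) • (x - z))
            = (β ^ n - β ^ (n+1)) • (x - z) := by module
        rw [h, norm_smul, Real.norm_eq_abs, abs_of_nonneg]
        have : β ^ (n+1) = β ^ n * β := pow_succ β n
        nlinarith [hβlt, hbn]
      have h1 : ‖y - (z + (1 - β ^ n) • (x - z))‖ ≤
          β ^ (n+1) * ρ + (β ^ n - β ^ (n+1)) * L := by
        calc ‖y - (z + (1 - β ^ n) • (x - z))‖
            ≤ ‖y - (z + (1 - β ^ (n+1)) • (x - z))‖ +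
              ‖(z + (1 - β ^ (n+1)) • (x - z)) - (z + (1 - β ^ n) • (x - z))‖ := by
                have h : y - (z + (1 - β ^ n) • (x - z)) =
                    (y - (z + (1 - β ^ (n+1)) • (x - z))) +
                    ((z + (1 - β ^ (n+1)) • (x - z)) - (z + (1 - β ^ n) • (x - z))) := by
                  abel
                rw [h]
                exact norm_add_le _ _
          _ ≤ β ^ (n+1) * ρ + (β ^ n - β ^ (n+1)) * L := by
                rw [hcc]
                exact add_le_add_left hy _
      have h2 : β ^ (n+1) * ρ + (β ^ n - β ^ (n+1)) * L < 2 * (β ^ n * ρ) := by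
        have hp1 : β ^ (n+1) = β ^ n * β := pow_succ β n
        rw [hp1]
        have hx1 : β ^ n * ((1 - β) * L) < β ^ n * ρ :=
          (mul_lt_mul_iff_right₀ hbn).mpr hβL
        have hx2 : β ^ n * β * ρ ≤ β ^ n * ρ := by
          nlinarith [mul_nonneg (mul_nonneg hbn.le hρ.le) (sub_nonneg.mpr hβlt.le)]
        nlinarith
      linarith
  -- conclude
  have hcn : ∀ n : ℕ, F (z + (1 - β ^ n) • (x - z)) = z + (1 - β ^ n) • (x - z) := by
    intro n
    apply hkey n
    simp only [sub_self, norm_zero]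
    positivity
  have hFx : ∀ n : ℕ, ‖F x - x‖ ≤ 2 * (β ^ n * L) := by
    intro n
    have hcmem : ‖z + (1 - β ^ n) • (x - z)‖ ≤ 1 := by
      apply hballn n
      simp only [sub_self, norm_zero]
      positivity
    have h2 := hF x hxball (z + (1 - β ^ n) • (x - z)) ((hmem _).mp hcmem)
    rw [hcn n] at h2
    have hxc : ‖x - (z + (1 - β ^ n) • (x - z))‖ = β ^ n * L := by
      have h : x - (z + (1 - β ^ n) • (x - z)) = β ^ n • (x - z) := by module
      rw [h, norm_smul, Real.norm_eq_abs, abs_of_pos (pow_pos hβpos n)]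
    calc ‖F x - x‖ ≤ ‖F x - (z + (1 - β ^ n) • (x - z))‖ +
          ‖(z + (1 - β ^ n) • (x - z)) - x‖ := by
            have h : F x - x = (F x - (z + (1 - β ^ n) • (x - z))) +
                ((z + (1 - β ^ n) • (x - z)) - x) := by abel
            rw [h]
            exact norm_add_le _ _
      _ = β ^ n * L + β ^ n * L := by
            rw [h2, norm_sub_rev (z + (1 - β ^ n) • (x - z)) x, hxc]
      _ = 2 * (β ^ n * L) := by ring
  have hFx0 : ‖F x - x‖ ≤ 0 := by
    apply le_of_forall_pos_le_add
    intro ε hε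
    obtain ⟨n, hn⟩ := exists_pow_lt_of_lt_one
      (show (0:ℝ) < ε / (2 * L + 1) by positivity) hβlt
    have hβn : 0 ≤ β ^ n := (pow_pos hβpos n).le
    have h1 : β ^ n * (2 * L + 1) < ε := by
      rw [← lt_div_iff₀ (by positivity : (0:ℝ) < 2 * L + 1)]
      exact hn
    have h2 : 2 * (β ^ n * L) ≤ β ^ n * (2 * L + 1) := by nlinarith
    calc ‖F x - x‖ ≤ 2 * (β ^ n * L) := hFx n
      _ ≤ β ^ n * (2 * L + 1) := h2
      _ ≤ 0 + ε := by linarith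
  have : F x - x = 0 := norm_le_zero_iff.mp hFx0
  exact sub_eq_zero.mp this
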